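/- Let λ ∈ Λ. If s ∈ T(λ,i) and t ∈ T(λ,j) with i ≠ j, then ⟨c_s^λ, c_t^λ⟩ = 0 in Δ(λ). If s,t ∈ T(λ,i), then the value ⟨c_s^λ, c_t^λ⟩ computed in the cell module Δ(λ) of A equals the value of the bilinear form on the cell module V(λ,i) of the cellular algebra e_i A e_i. Consequently, the Gram matrix G(λ) of Δ(λ) with respect to the basis B is block diagonal: G(λ) = ⊕_{i∈I_λ} M(λ,i), where M(λ,i) is the Gram matrix of V(λ,i) with respect to the basis B_i = {c_s^λ : s ∈ T(λ,i)}. -/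

import Mathlib

open scoped Classical

noncomputable section


/-- A cellular algebra over a field `F`, in the sense of Graham–Lehrer: an associative unital
`F`-algebra `A` together with a finite poset `Λ`, finite nonempty index sets `T l`, a basis
`c l s t` indexed by triples, an `F`-linear anti-automorphism `star` fixing the basis up to
transposition, and structure coefficients `r` satisfying the cellular multiplication rule
modulo the span `A^{>l}` of higher basis elements. -/
structure CellularAlgebra (F : Type*) [Field F] (A : Type*) [Ring A] [Algebra F A]
    (Λ : Type*) [PartialOrder Λ] [Fintype Λ]
    (T : Λ → Type*) [∀ l, Fintype (T l)] [∀ l, Nonempty (T l)] where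
  c : (l : Λ) → T l → T l → A
  basis : Module.Basis ((l : Λ) × (T l × T l)) F A
  basis_eq : ∀ (l : Λ) (s t : T l), basis ⟨l, (s, t)⟩ = c l s t
  star : A →ₗ[F] A
  star_mul : ∀ a b : A, star (a * b) = star b * star a
  star_star : ∀ a : A, star (star a) = a
  star_c : ∀ (l : Λ) (s t : T l), star (c l s t) = c l t s
  r : A → (l : Λ) → T l → T l → F
  cell_mem : ∀ (a : A) (l : Λ) (s t : T l),
    a * c l s t - ∑ u : T l, r a l u s • c l u t ∈
      Submodule.span F {x : A | ∃ μ : Λ, l < μ ∧ ∃ p q : T μ, x = c μ p q}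

namespace CellularAlgebra

variable {F : Type*} [Field F] {A : Type*} [Ring A] [Algebra F A]
  {Λ : Type*} [PartialOrder Λ] [Fintype Λ]
  {T : Λ → Type*} [∀ l, Fintype (T l)] [∀ l, Nonempty (T l)]
  (cd : CellularAlgebra F A Λ T)

/-- The ideal-like subspace `A^{>l}`, the `F`-span of all basis elements of strictly
higher degree. -/
def spanAbove (l : Λ) : Submodule F A :=
  Submodule.span F {x : A | ∃ μ : Λ, l < μ ∧ ∃ p q : T μ, x = cd.c μ p q}

variable {I : Type*} [Fintype I] (e : I → A)

/-- Assumptions (A1)–(A4): a decomposition of `1` into nonzero pairwise orthogonal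
idempotents `e i`, fixed by `star`, such that each basis row is absorbed by some `e i`. -/
structure Decomp : Prop where
  ne_zero : ∀ i, e i ≠ 0
  idem : ∀ i, e i * e i = e i
  orth : ∀ i j, i ≠ j → e i * e j = 0
  sum_eq_one : ∑ i, e i = 1
  star_fix : ∀ i, cd.star (e i) = e i
  exists_idx : ∀ (l : Λ) (t : T l), ∃ i : I, ∀ s : T l, e i * cd.c l t s = cd.c l t s

/-- `T(λ, i)`. -/
def Tset (i : I) (l : Λ) : Set (T l) :=
  {t : T l | ∀ s : T l, e i * cd.c l t s = cd.c l t s}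

/-- `Λ_i`. -/
def LambdaSet (i : I) : Set Λ := {l : Λ | (cd.Tset e i l).Nonempty}

/-- `I_λ`. -/
def Iset (l : Λ) : Set I := {i : I | l ∈ cd.LambdaSet e i}


/-- The corner subspace `e_i A e_i = {x | e i * x = x ∧ x * e i = x}` of `A`. -/
def corner (cA : CellularAlgebra F A Λ T) (e' : I → A) (i : I) : Submodule F A where
  carrier := {x : A | e' i * x = x ∧ x * e' i = x}
  add_mem' := fun ha hb => ⟨by rw [mul_add, ha.1, hb.1], by rw [add_mul, ha.2, hb.2]⟩
  zero_mem' := ⟨mul_zero _, zero_mul _⟩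
  smul_mem' := fun r x hx => ⟨by rw [mul_smul_comm, hx.1], by rw [smul_mul_assoc, hx.2]⟩

/-- `(e_i A e_i)^{>l}`: the span of the cellular basis elements of `e_i A e_i` of strictly
higher degree. -/
def cornerSpanAbove (i : I) (l : Λ) : Submodule F A :=
  Submodule.span F {x : A | ∃ μ : Λ, l < μ ∧
    ∃ p ∈ cd.Tset e i μ, ∃ q ∈ cd.Tset e i μ, x = cd.c μ p q}

lemma smul_c_mem_spanAbove_iff (l : Λ) (r : F) (u v : T l)
    (h : r • cd.c l u v ∈ cd.spanAbove l) : r = 0 := by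
  by_contra hr
  have hmem : cd.c l u v ∈ cd.spanAbove l := by
    have := Submodule.smul_mem _ r⁻¹ h
    rwa [smul_smul, inv_mul_cancel₀ hr, one_smul] at this
  set s : Set ((l' : Λ) × (T l' × T l')) := {p | l < p.1} with hs
  have hsub : cd.spanAbove l ≤ Submodule.span F (cd.basis '' s) := by
    apply Submodule.span_le.2
    rintro x ⟨μ, hμ, p, q, rfl⟩
    exact Submodule.subset_span ⟨⟨μ, (p, q)⟩, hμ, cd.basis_eq μ p q⟩
  have hnot : cd.basis ⟨l, (u, v)⟩ ∉ Submodule.span F (cd.basis '' s) :=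
    cd.basis.linearIndependent.notMem_span_image (by simp [hs])
  exact hnot (by rw [cd.basis_eq]; exact hsub hmem)

lemma c_mul_e (hd : cd.Decomp e) {i : I} {l : Λ} {t : T l} (ht : t ∈ cd.Tset e i l)
    (u : T l) : cd.c l u t * e i = cd.c l u t := by
  have h := ht u
  have := congrArg cd.star h
  rwa [cd.star_mul, hd.star_fix i, cd.star_c] at this

/-- for the bilinear form `⟨·,·⟩` of the cell module `Δ(λ)` (with Gram values
`φ s t = ⟨c_s^λ, c_t^λ⟩`, determined by `c_{us}^λ c_{tv}^λ ≡ φ s t • c_{uv}^λ mod A^{>λ}`)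
and the forms of the corner cell modules `V(λ,i)` (with Gram values `φi i`), one has:
`φ s t = 0` when `s ∈ T(λ,i)`, `t ∈ T(λ,j)` with `i ≠ j`; `φ s t = φi i s t` when
`s, t ∈ T(λ,i)`; hence the Gram matrix `G(λ) = (φ s t)` is block diagonal,
`G(λ) = ⊕_{i ∈ I_λ} M(λ,i)` with `M(λ,i) = (φi i s t)_{s,t ∈ T(λ,i)}`. -/
theorem statement_7 (hd : cd.Decomp e) (l : Λ)
    (φ : T l → T l → F)
    (hφ : ∀ s t u v : T l,
      cd.c l u s * cd.c l t v - φ s t • cd.c l u v ∈ cd.spanAbove l)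
    (φi : I → T l → T l → F)
    (hφi : ∀ i : I, ∀ s ∈ cd.Tset e i l, ∀ t ∈ cd.Tset e i l, ∀ u ∈ cd.Tset e i l,
      ∀ v ∈ cd.Tset e i l,
      cd.c l u s * cd.c l t v - φi i s t • cd.c l u v ∈ cd.cornerSpanAbove e i l) :
    (∀ i j : I, i ≠ j → ∀ s ∈ cd.Tset e i l, ∀ t ∈ cd.Tset e j l, φ s t = 0) ∧
    (∀ i : I, ∀ s ∈ cd.Tset e i l, ∀ t ∈ cd.Tset e i l, φ s t = φi i s t) ∧
    (∀ s t : T l, (¬ ∃ i : I, s ∈ cd.Tset e i l ∧ t ∈ cd.Tset e i l) → φ s t = 0) := by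
  have part1 : ∀ i j : I, i ≠ j → ∀ s ∈ cd.Tset e i l, ∀ t ∈ cd.Tset e j l, φ s t = 0 := by
    intro i j hij s hs t ht
    have hmul : cd.c l s s * cd.c l t t = 0 := by
      calc cd.c l s s * cd.c l t t = (cd.c l s s * e i) * (e j * cd.c l t t) := by
            rw [cd.c_mul_e e hd hs, ht t]
        _ = cd.c l s s * (e i * e j) * cd.c l t t := by simp [mul_assoc]
        _ = 0 := by rw [hd.orth i j hij, mul_zero, zero_mul]
    have h := hφ s t s t
    rw [hmul, zero_sub, neg_mem_iff] at h
    exact cd.smul_c_mem_spanAbove_iff l _ s t h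
  refine ⟨part1, ?_, ?_⟩
  · intro i s hs t ht
    have h1 := hφ s t s t
    have h2 := hφi i s hs t ht s hs t ht
    have h2' : cd.c l s s * cd.c l t t - φi i s t • cd.c l s t ∈ cd.spanAbove l := by
      refine Submodule.span_le.2 ?_ h2
      rintro x ⟨μ, hμ, p, _, q, _, rfl⟩
      exact Submodule.subset_span ⟨μ, hμ, p, q, rfl⟩
    have h3 := Submodule.sub_mem _ h2' h1
    have h4 : (φ s t - φi i s t) • cd.c l s t ∈ cd.spanAbove l := by
      have : (φ s t - φi i s t) • cd.c l s t =
          (cd.c l s s * cd.c l t t - φi i s t • cd.c l s t) -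
          (cd.c l s s * cd.c l t t - φ s t • cd.c l s t) := by
        rw [sub_smul]; abel
      rw [this]; exact h3
    exact sub_eq_zero.mp (cd.smul_c_mem_spanAbove_iff l _ s t h4)
  · intro s t hne
    obtain ⟨i, hi⟩ := hd.exists_idx l s
    obtain ⟨j, hj⟩ := hd.exists_idx l t
    have hij : i ≠ j := fun h => hne ⟨i, hi, h ▸ hj⟩
    exact part1 i j hij s hi t hj

end CellularAlgebra
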